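/- (Positivity of V₊ + V_α near the horizon, case α ≤ 1) If α ≤ 1, |a|l < r₊², |a|<l, then the inequality V₊(r) + V_α(r) ≥ C·(Δ₋/(r²+a²)²)·r² holds globally for r ≥ r₊, where V_α(r) = −(α/l²)·(Δ₋/(r²+a²)²)·(r² + Θ(α)a²) with Θ(α)=1 for α>0 and Θ(α)=0 for α≤0, and C>0 depends only on M, l, a, α. -/
import Mathlib


/-- Δ₋(r) for the Kerr-AdS spacetime with parameters (M, a, l). -/
noncomputable def Dm (M l a r : ℝ) : ℝ := (r^2 + a^2) * (1 + r^2/l^2) - 2*M*r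

/-- The potential component V₊. -/
noncomputable def Vplus (M l a r : ℝ) : ℝ :=
  -(Dm M l a r)^2 * (3*r^2) / (r^2 + a^2)^4
    + Dm M l a r * (5*r^4/l^2 + 3*r^2*(1 + a^2/l^2) - 4*M*r + a^2) / (r^2 + a^2)^3

/-- The mass-term potential V_α, with Θ(α)=1 for α>0 and Θ(α)=0 for α≤0. -/
noncomputable def Valpha (M l a α r : ℝ) : ℝ :=
  -(α/l^2) * (Dm M l a r / (r^2 + a^2)^2) * (r^2 + (if 0 < α then 1 else 0) * a^2)

set_option maxHeartbeats 1000000 in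
/-- for α ≤ 1, the global positivity estimate
V₊ + V_α ≥ C (Δ₋/(r²+a²)²) r² for r ≥ r₊. -/
theorem stmt_11 (M l a rp α : ℝ) (hM : 0 < M) (hl : 0 < l) (ha : |a| < l)
    (hHR : |a| * l < rp^2) (hrp : 0 < rp) (hα : α ≤ 1)
    (hroot : Dm M l a rp = 0)
    (hΔ : ∀ r : ℝ, rp ≤ r → 0 ≤ Dm M l a r) :
    ∃ C : ℝ, 0 < C ∧ ∀ r : ℝ, rp ≤ r →
      C * (Dm M l a r / (r^2 + a^2)^2) * r^2 ≤ Vplus M l a r + Valpha M l a α r := by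
  have ha2 : a^2 < rp^2 := by
    have h1 : a^2 ≤ |a| * l := by nlinarith [sq_abs a, ha.le, abs_nonneg a]
    linarith
  set C := (rp^2 - a^2)/(rp^2 * l^2) with hC
  have hCpos : 0 < C := div_pos (by linarith) (by positivity)
  refine ⟨C, hCpos, ?_⟩
  intro r hr
  have hr0 : 0 < r := lt_of_lt_of_le hrp hr
  have hr2 : rp^2 ≤ r^2 := by nlinarith
  have hS : (0:ℝ) < r^2 + a^2 := by positivity
  have hD : 0 ≤ Dm M l a r := hΔ r hr
  have hkey : C * r^2 ≤ (r^2 - a^2)/l^2 := by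
    rw [hC, div_mul_eq_mul_div, div_le_div_iff₀ (by positivity) (by positivity)]
    nlinarith [mul_nonneg (mul_nonneg (sq_nonneg a) (sq_nonneg l)) (sub_nonneg.mpr hr2)]
  rw [← sub_nonneg]
  by_cases hpos : 0 < α
  · have heq : Vplus M l a r + Valpha M l a α r - C * (Dm M l a r/(r^2+a^2)^2)*r^2
        = Dm M l a r * (a^2 * Dm M l a r + 2*M*r*(r^2 - a^2)
          + (2*r^2/l^2 - α*(r^2+a^2)/l^2 - C*r^2) * (r^2+a^2)^2) / (r^2+a^2)^4 := by
      simp only [Vplus, Valpha, Dm, if_pos hpos]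
      field_simp
      ring
    rw [heq]
    apply div_nonneg _ (by positivity)
    apply mul_nonneg hD
    have h1 : 0 ≤ 2*r^2/l^2 - α*(r^2+a^2)/l^2 - C*r^2 := by
      have hnum : (r^2 - a^2) ≤ 2*r^2 - α*(r^2+a^2) := by nlinarith
      have step : (r^2 - a^2)/l^2 ≤ (2*r^2 - α*(r^2+a^2))/l^2 := by gcongr
      have hexp : (2*r^2 - α*(r^2+a^2))/l^2 = 2*r^2/l^2 - α*(r^2+a^2)/l^2 := by ring
      linarith [hkey]
    nlinarith [mul_nonneg h1 (by positivity : (0:ℝ) ≤ (r^2+a^2)^2),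
      mul_nonneg hD (sq_nonneg a),
      mul_nonneg (mul_nonneg hM.le hr0.le) (by linarith : (0:ℝ) ≤ r^2 - a^2)]
  · have heq : Vplus M l a r + Valpha M l a α r - C * (Dm M l a r/(r^2+a^2)^2)*r^2
        = Dm M l a r * (a^2 * Dm M l a r + 2*M*r*(r^2 - a^2)
          + (2*r^2/l^2 - α*r^2/l^2 - C*r^2) * (r^2+a^2)^2) / (r^2+a^2)^4 := by
      simp only [Vplus, Valpha, Dm, if_neg hpos, zero_mul, add_zero]
      field_simp
      ring
    rw [heq]
    apply div_nonneg _ (by positivity)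
    apply mul_nonneg hD
    have h1 : 0 ≤ 2*r^2/l^2 - α*r^2/l^2 - C*r^2 := by
      have hnum : (r^2 - a^2) ≤ 2*r^2 - α*r^2 := by
        nlinarith [not_lt.mp hpos, sq_nonneg a, sq_nonneg r]
      have step : (r^2 - a^2)/l^2 ≤ (2*r^2 - α*r^2)/l^2 := by gcongr
      have hexp : (2*r^2 - α*r^2)/l^2 = 2*r^2/l^2 - α*r^2/l^2 := by ring
      linarith [hkey]
    nlinarith [mul_nonneg h1 (by positivity : (0:ℝ) ≤ (r^2+a^2)^2),
      mul_nonneg hD (sq_nonneg a),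
      mul_nonneg (mul_nonneg hM.le hr0.le) (by linarith : (0:ℝ) ≤ r^2 - a^2)]
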